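/- arXiv:2406.20022 — 2 statements merged into one kernel-verified Lean document; each statement's English description precedes it below -/
import Mathlib

section
/- Let n, d₁, d₂ be positive integers, let U : ℂⁿ ⊗ ℂ² → ℂ^{d₁} ⊗ ℂ^{d₂} be a linear isometry, and let θ ∈ [0, π/2]. Let P be the orthogonal projection of ℂ² onto span{(1,0)} and L the orthogonal projection onto span{(cos θ, sin θ)}. If (P, v) and (L, w) are hidden-measurement pairs for U, with v, w unit vectors in ℂⁿ, then Re⟨v, w⟩ ≤ 2/(sin θ + 2 cos θ), and consequently ‖v − w‖² ≥ 2 − 4/(sin θ + 2 cos θ). -/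
open scoped ComplexConjugate Matrix

noncomputable section

/-- The matrix form of a vector in `ℂ^{d₁} ⊗ ℂ^{d₂}`. -/
def MatOf {d₁ d₂ : ℕ} (c : EuclideanSpace ℂ (Fin d₁ × Fin d₂)) :
    Matrix (Fin d₁) (Fin d₂) ℂ :=
  Matrix.of fun i j => c (i, j)

/-- The tensor product `w ⊗ x` of `w ∈ ℂⁿ` with `x ∈ ℂ²`. -/
def tensorWith2 {n : ℕ} (w : EuclideanSpace ℂ (Fin n)) (x : Fin 2 → ℂ) :
    EuclideanSpace ℂ (Fin n × Fin 2) :=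
  WithLp.toLp 2 (fun p : Fin n × Fin 2 => w p.1 * x p.2)

/-- `R_w = Mat(U(w ⊗ e₁))`. -/
def Rmat {n d₁ d₂ : ℕ}
    (U : EuclideanSpace ℂ (Fin n × Fin 2) →ₗᵢ[ℂ] EuclideanSpace ℂ (Fin d₁ × Fin d₂))
    (w : EuclideanSpace ℂ (Fin n)) : Matrix (Fin d₁) (Fin d₂) ℂ :=
  MatOf (U (tensorWith2 w ![1, 0]))

/-- `S_w = Mat(U(w ⊗ e₂))`. -/
def Smat {n d₁ d₂ : ℕ}
    (U : EuclideanSpace ℂ (Fin n × Fin 2) →ₗᵢ[ℂ] EuclideanSpace ℂ (Fin d₁ × Fin d₂))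
    (w : EuclideanSpace ℂ (Fin n)) : Matrix (Fin d₁) (Fin d₂) ℂ :=
  MatOf (U (tensorWith2 w ![0, 1]))

/-- The rank-one orthogonal projection onto the span of the unit vector `(x, y) ∈ ℂ²`. -/
def projOf (x y : ℂ) : Matrix (Fin 2) (Fin 2) ℂ :=
  !![x * conj x, x * conj y; y * conj x, y * conj y]

/-- `(P, w)` is a hidden-measurement pair for the isometry `U`. -/
def IsHiddenPair {n d₁ d₂ : ℕ}
    (U : EuclideanSpace ℂ (Fin n × Fin 2) →ₗᵢ[ℂ] EuclideanSpace ℂ (Fin d₁ × Fin d₂))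
    (P : Matrix (Fin 2) (Fin 2) ℂ) (w : EuclideanSpace ℂ (Fin n)) : Prop :=
  ‖w‖ = 1 ∧
  ∃ x y : ℂ, ‖x‖ ^ 2 + ‖y‖ ^ 2 = 1 ∧ P = projOf x y ∧
    (x • Rmat U w + y • Smat U w) * ((-(conj y)) • Rmat U w + (conj x) • Smat U w)ᴴ = 0 ∧
    (x • Rmat U w + y • Smat U w)ᴴ * ((-(conj y)) • Rmat U w + (conj x) • Smat U w) = 0


namespace HMAux

variable {n d₁ d₂ : ℕ}

/-! ### Columns and rows of a vector in the tensor product space -/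

def colv (x : EuclideanSpace ℂ (Fin d₁ × Fin d₂)) (j : Fin d₂) : EuclideanSpace ℂ (Fin d₁) :=
  WithLp.toLp 2 (fun k => x (k, j))

def rowv (x : EuclideanSpace ℂ (Fin d₁ × Fin d₂)) (i : Fin d₁) : EuclideanSpace ℂ (Fin d₂) :=
  WithLp.toLp 2 (fun l => x (i, l))

lemma inner_colv (x y : EuclideanSpace ℂ (Fin d₁ × Fin d₂)) :
    (inner ℂ x y : ℂ) = ∑ j, (inner ℂ (colv x j) (colv y j) : ℂ) := by
  simp only [PiLp.inner_apply, RCLike.inner_apply', colv]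
  exact Fintype.sum_prod_type_right _

lemma inner_rowv (x y : EuclideanSpace ℂ (Fin d₁ × Fin d₂)) :
    (inner ℂ x y : ℂ) = ∑ i, (inner ℂ (rowv x i) (rowv y i) : ℂ) := by
  simp only [PiLp.inner_apply, RCLike.inner_apply', rowv]
  exact Fintype.sum_prod_type _

lemma basis_expand {d : ℕ} (z : EuclideanSpace ℂ (Fin d)) :
    z = ∑ k, z k • EuclideanSpace.single k 1 := by
  ext i
  rw [WithLp.ofLp_sum, Finset.sum_apply]
  simp [EuclideanSpace.single_apply]

lemma proj_matrix {d : ℕ} (W : Submodule ℂ (EuclideanSpace ℂ (Fin d)))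
    (z : EuclideanSpace ℂ (Fin d)) (i : Fin d) :
    (Submodule.orthogonalProjectionOnto W z : EuclideanSpace ℂ (Fin d)) i
      = ∑ k, z k * (Submodule.orthogonalProjectionOnto W (EuclideanSpace.single k 1) :
          EuclideanSpace ℂ (Fin d)) i := by
  conv_lhs => rw [basis_expand z]
  rw [map_sum, Submodule.coe_sum, WithLp.ofLp_sum, Finset.sum_apply]
  refine Finset.sum_congr rfl fun k _ => ?_
  rw [map_smul]
  rfl

/-! ### The two commuting projections -/

noncomputable def Emap (W : Submodule ℂ (EuclideanSpace ℂ (Fin d₁))) :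
    EuclideanSpace ℂ (Fin d₁ × Fin d₂) →ₗ[ℂ] EuclideanSpace ℂ (Fin d₁ × Fin d₂) where
  toFun x := WithLp.toLp 2 (fun p : Fin d₁ × Fin d₂ => (Submodule.orthogonalProjectionOnto W (colv x p.2) : EuclideanSpace ℂ (Fin d₁)) p.1)
  map_add' x y := by
    ext p
    have h : colv (x + y) p.2 = colv x p.2 + colv y p.2 := rfl
    show (Submodule.orthogonalProjectionOnto W (colv (x + y) p.2) : EuclideanSpace ℂ (Fin d₁)) p.1 = _
    rw [h, map_add]
    rfl
  map_smul' c x := by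
    ext p
    have h : colv (c • x) p.2 = c • colv x p.2 := rfl
    show (Submodule.orthogonalProjectionOnto W (colv (c • x) p.2) : EuclideanSpace ℂ (Fin d₁)) p.1 = _
    rw [h, map_smul]
    rfl

noncomputable def Fmap (W : Submodule ℂ (EuclideanSpace ℂ (Fin d₂))) :
    EuclideanSpace ℂ (Fin d₁ × Fin d₂) →ₗ[ℂ] EuclideanSpace ℂ (Fin d₁ × Fin d₂) where
  toFun x := WithLp.toLp 2 (fun p : Fin d₁ × Fin d₂ => (Submodule.orthogonalProjectionOnto W (rowv x p.1) : EuclideanSpace ℂ (Fin d₂)) p.2)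
  map_add' x y := by
    ext p
    have h : rowv (x + y) p.1 = rowv x p.1 + rowv y p.1 := rfl
    show (Submodule.orthogonalProjectionOnto W (rowv (x + y) p.1) : EuclideanSpace ℂ (Fin d₂)) p.2 = _
    rw [h, map_add]
    rfl
  map_smul' c x := by
    ext p
    have h : rowv (c • x) p.1 = c • rowv x p.1 := rfl
    show (Submodule.orthogonalProjectionOnto W (rowv (c • x) p.1) : EuclideanSpace ℂ (Fin d₂)) p.2 = _
    rw [h, map_smul]
    rfl

lemma colv_Emap (W : Submodule ℂ (EuclideanSpace ℂ (Fin d₁)))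
    (x : EuclideanSpace ℂ (Fin d₁ × Fin d₂)) (j : Fin d₂) :
    colv (Emap W x) j = (Submodule.orthogonalProjectionOnto W (colv x j) : EuclideanSpace ℂ (Fin d₁)) := rfl

lemma rowv_Fmap (W : Submodule ℂ (EuclideanSpace ℂ (Fin d₂)))
    (x : EuclideanSpace ℂ (Fin d₁ × Fin d₂)) (i : Fin d₁) :
    rowv (Fmap W x) i = (Submodule.orthogonalProjectionOnto W (rowv x i) : EuclideanSpace ℂ (Fin d₂)) := rfl

lemma Emap_sa (W : Submodule ℂ (EuclideanSpace ℂ (Fin d₁)))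
    (x y : EuclideanSpace ℂ (Fin d₁ × Fin d₂)) :
    (inner ℂ (Emap W x) y : ℂ) = inner ℂ x (Emap W y) := by
  rw [inner_colv, inner_colv]
  refine Finset.sum_congr rfl fun j _ => ?_
  rw [colv_Emap, colv_Emap]
  exact W.inner_starProjection_left_eq_right _ _

lemma Fmap_sa (W : Submodule ℂ (EuclideanSpace ℂ (Fin d₂)))
    (x y : EuclideanSpace ℂ (Fin d₁ × Fin d₂)) :
    (inner ℂ (Fmap W x) y : ℂ) = inner ℂ x (Fmap W y) := by
  rw [inner_rowv, inner_rowv]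
  refine Finset.sum_congr rfl fun i _ => ?_
  rw [rowv_Fmap, rowv_Fmap]
  exact W.inner_starProjection_left_eq_right _ _

lemma Emap_idem (W : Submodule ℂ (EuclideanSpace ℂ (Fin d₁)))
    (x : EuclideanSpace ℂ (Fin d₁ × Fin d₂)) : Emap W (Emap W x) = Emap W x := by
  ext p
  show (Submodule.orthogonalProjectionOnto W (colv (Emap W x) p.2) : EuclideanSpace ℂ (Fin d₁)) p.1 = _
  rw [colv_Emap, Submodule.orthogonalProjectionOnto_mem_subspace_eq_self]
  rfl

lemma Fmap_idem (W : Submodule ℂ (EuclideanSpace ℂ (Fin d₂)))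
    (x : EuclideanSpace ℂ (Fin d₁ × Fin d₂)) : Fmap W (Fmap W x) = Fmap W x := by
  ext p
  show (Submodule.orthogonalProjectionOnto W (rowv (Fmap W x) p.1) : EuclideanSpace ℂ (Fin d₂)) p.2 = _
  rw [rowv_Fmap, Submodule.orthogonalProjectionOnto_mem_subspace_eq_self]
  rfl

lemma Emap_Fmap_comm (W₁ : Submodule ℂ (EuclideanSpace ℂ (Fin d₁)))
    (W₂ : Submodule ℂ (EuclideanSpace ℂ (Fin d₂)))
    (x : EuclideanSpace ℂ (Fin d₁ × Fin d₂)) :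
    Emap W₁ (Fmap W₂ x) = Fmap W₂ (Emap W₁ x) := by
  ext p
  show (Submodule.orthogonalProjectionOnto W₁ (colv (Fmap W₂ x) p.2) : EuclideanSpace ℂ (Fin d₁)) p.1
    = (Submodule.orthogonalProjectionOnto W₂ (rowv (Emap W₁ x) p.1) : EuclideanSpace ℂ (Fin d₂)) p.2
  rw [proj_matrix, proj_matrix]
  have hL : ∀ k, colv (Fmap W₂ x) p.2 k
      = ∑ l, x (k, l) * (Submodule.orthogonalProjectionOnto W₂ (EuclideanSpace.single l 1) :
          EuclideanSpace ℂ (Fin d₂)) p.2 := fun k => proj_matrix W₂ (rowv x k) p.2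
  have hR : ∀ l, rowv (Emap W₁ x) p.1 l
      = ∑ k, x (k, l) * (Submodule.orthogonalProjectionOnto W₁ (EuclideanSpace.single k 1) :
          EuclideanSpace ℂ (Fin d₁)) p.1 := fun l => proj_matrix W₁ (colv x l) p.1
  calc ∑ k, colv (Fmap W₂ x) p.2 k * (Submodule.orthogonalProjectionOnto W₁ (EuclideanSpace.single k 1) :
          EuclideanSpace ℂ (Fin d₁)) p.1
      = ∑ k, ∑ l, (x (k, l) * (Submodule.orthogonalProjectionOnto W₂ (EuclideanSpace.single l 1) :
            EuclideanSpace ℂ (Fin d₂)) p.2) * (Submodule.orthogonalProjectionOnto W₁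
            (EuclideanSpace.single k 1) : EuclideanSpace ℂ (Fin d₁)) p.1 := by
        refine Finset.sum_congr rfl fun k _ => ?_
        rw [hL k, Finset.sum_mul]
    _ = ∑ l, ∑ k, (x (k, l) * (Submodule.orthogonalProjectionOnto W₂ (EuclideanSpace.single l 1) :
            EuclideanSpace ℂ (Fin d₂)) p.2) * (Submodule.orthogonalProjectionOnto W₁
            (EuclideanSpace.single k 1) : EuclideanSpace ℂ (Fin d₁)) p.1 := Finset.sum_comm
    _ = ∑ l, rowv (Emap W₁ x) p.1 l * (Submodule.orthogonalProjectionOnto W₂ (EuclideanSpace.single l 1) :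
            EuclideanSpace ℂ (Fin d₂)) p.2 := by
        refine Finset.sum_congr rfl fun l _ => ?_
        rw [hR l, Finset.sum_mul]
        refine Finset.sum_congr rfl fun k _ => ?_
        ring

lemma Emap_fix (W : Submodule ℂ (EuclideanSpace ℂ (Fin d₁)))
    (x : EuclideanSpace ℂ (Fin d₁ × Fin d₂)) (h : ∀ j, colv x j ∈ W) :
    Emap W x = x := by
  ext p
  show (Submodule.orthogonalProjectionOnto W (colv x p.2) : EuclideanSpace ℂ (Fin d₁)) p.1 = x p
  rw [← Submodule.starProjection_apply, Submodule.starProjection_eq_self_iff.mpr (h p.2)]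
  rfl

lemma Emap_kill (W : Submodule ℂ (EuclideanSpace ℂ (Fin d₁)))
    (x : EuclideanSpace ℂ (Fin d₁ × Fin d₂)) (h : ∀ j, colv x j ∈ Wᗮ) :
    Emap W x = 0 := by
  ext p
  show (Submodule.orthogonalProjectionOnto W (colv x p.2) : EuclideanSpace ℂ (Fin d₁)) p.1 = 0
  rw [Submodule.orthogonalProjectionOnto_apply_of_mem_orthogonal (h p.2)]
  rfl

lemma Fmap_fix (W : Submodule ℂ (EuclideanSpace ℂ (Fin d₂)))
    (x : EuclideanSpace ℂ (Fin d₁ × Fin d₂)) (h : ∀ i, rowv x i ∈ W) :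
    Fmap W x = x := by
  ext p
  show (Submodule.orthogonalProjectionOnto W (rowv x p.1) : EuclideanSpace ℂ (Fin d₂)) p.2 = x p
  rw [← Submodule.starProjection_apply, Submodule.starProjection_eq_self_iff.mpr (h p.1)]
  rfl

lemma Fmap_kill (W : Submodule ℂ (EuclideanSpace ℂ (Fin d₂)))
    (x : EuclideanSpace ℂ (Fin d₁ × Fin d₂)) (h : ∀ i, rowv x i ∈ Wᗮ) :
    Fmap W x = 0 := by
  ext p
  show (Submodule.orthogonalProjectionOnto W (rowv x p.1) : EuclideanSpace ℂ (Fin d₂)) p.2 = 0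
  rw [Submodule.orthogonalProjectionOnto_apply_of_mem_orthogonal (h p.1)]
  rfl

end HMAux

namespace HMAux

lemma pyth {V : Type*} [NormedAddCommGroup V] [InnerProductSpace ℂ V]
    (G : V →ₗ[ℂ] V) (hsa : ∀ p q : V, (inner ℂ (G p) q : ℂ) = inner ℂ p (G q))
    (hid : ∀ p, G (G p) = G p) (p : V) :
    ‖G p‖ ^ 2 + ‖p - G p‖ ^ 2 = ‖p‖ ^ 2 := by
  have horth : (inner ℂ (G p) (p - G p) : ℂ) = 0 := by
    rw [inner_sub_right]
    have h1 : (inner ℂ (G p) (G p) : ℂ) = inner ℂ (G p) p := by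
      rw [hsa p (G p), hid, ← hsa p p]
    rw [h1, sub_self]
  have h2 := norm_add_sq_eq_norm_sq_add_norm_sq_of_inner_eq_zero (G p) (p - G p) horth
  have h3 : G p + (p - G p) = p := by abel
  rw [h3] at h2
  rw [pow_two, pow_two, pow_two]
  linarith [h2]

lemma sum_le_two {u v : ℝ} (hu0 : 0 ≤ u) (hv0 : 0 ≤ v) (e1 : u ^ 2 + v ^ 2 ≤ 2) :
    u + v ≤ 2 := by
  nlinarith [sq_nonneg (u - v), sq_nonneg (u + v - 2)]

lemma cs_step {p q x y : ℝ} (hp : 0 ≤ p) (hq : 0 ≤ q) (hx : 0 ≤ x) (hy : 0 ≤ y)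
    (h : p ^ 2 + q ^ 2 = 1) : p * x + q * y ≤ Real.sqrt (x ^ 2 + y ^ 2) := by
  have hb : (p * x + q * y) ^ 2 ≤ x ^ 2 + y ^ 2 := by
    nlinarith [sq_nonneg (p * y - q * x)]
  have hnn : 0 ≤ p * x + q * y := by positivity
  exact (Real.le_sqrt hnn (by positivity)).mpr hb

lemma endgame (c s' T ρ ρ' α α' σ σ' β β' : ℝ)
    (hρ0 : 0 ≤ ρ) (hρ'0 : 0 ≤ ρ') (hα0 : 0 ≤ α) (hα'0 : 0 ≤ α')
    (hσ0 : 0 ≤ σ) (hσ'0 : 0 ≤ σ') (hβ0 : 0 ≤ β) (hβ'0 : 0 ≤ β')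
    (P1 : ρ ^ 2 + ρ' ^ 2 = 1) (P2 : α ^ 2 + α' ^ 2 = 1)
    (P3 : σ ^ 2 + σ' ^ 2 = 1) (P4 : β ^ 2 + β' ^ 2 = 1)
    (i1 : c * T ≤ ρ * α) (i2 : s' * T ≤ σ * α')
    (i3 : s' * T ≤ ρ' * β) (i4 : c * T ≤ σ' * β') :
    (s' + 2 * c) * T ≤ 2 := by
  have hu := cs_step hρ0 hρ'0 hα0 (by positivity : (0:ℝ) ≤ β / 2) P1
  have hv := cs_step hσ0 hσ'0 (by positivity : (0:ℝ) ≤ α' / 2) hβ'0 P3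
  have hu0 : (0:ℝ) ≤ Real.sqrt (α ^ 2 + (β / 2) ^ 2) := Real.sqrt_nonneg _
  have hv0 : (0:ℝ) ≤ Real.sqrt ((α' / 2) ^ 2 + β' ^ 2) := Real.sqrt_nonneg _
  have hu2 : Real.sqrt (α ^ 2 + (β / 2) ^ 2) ^ 2 = α ^ 2 + (β / 2) ^ 2 :=
    Real.sq_sqrt (by positivity)
  have hv2 : Real.sqrt ((α' / 2) ^ 2 + β' ^ 2) ^ 2 = (α' / 2) ^ 2 + β' ^ 2 :=
    Real.sq_sqrt (by positivity)
  have e1 : Real.sqrt (α ^ 2 + (β / 2) ^ 2) ^ 2 + Real.sqrt ((α' / 2) ^ 2 + β' ^ 2) ^ 2 ≤ 2 := by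
    have eβ : (β / 2) ^ 2 = β ^ 2 / 4 := by ring
    have eα : (α' / 2) ^ 2 = α' ^ 2 / 4 := by ring
    have hβsq : 0 ≤ β ^ 2 := sq_nonneg β
    have hα'sq : 0 ≤ α' ^ 2 := sq_nonneg α'
    linarith [hu2, hv2, P2, P4]
  have hsum := sum_le_two hu0 hv0 e1
  linarith [i1, i2, i3, i4, hu, hv, hsum]


lemma core {V : Type*} [NormedAddCommGroup V] [InnerProductSpace ℂ V]
    (E F : V →ₗ[ℂ] V)
    (hEsa : ∀ p q : V, (inner ℂ (E p) q : ℂ) = inner ℂ p (E q))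
    (hFsa : ∀ p q : V, (inner ℂ (F p) q : ℂ) = inner ℂ p (F q))
    (hEF : ∀ p, E (F p) = F (E p))
    (hEE : ∀ p, E (E p) = E p) (hFF : ∀ p, F (F p) = F p)
    (r s a b : V) (hrn : ‖r‖ = 1) (hsn : ‖s‖ = 1) (han : ‖a‖ = 1) (hbn : ‖b‖ = 1)
    (hEr : E r = r) (hEs : E s = 0) (hFa : F a = a) (hFb : F b = 0)
    (c s' : ℝ) (hc : 0 ≤ c) (hs' : 0 ≤ s') (t : ℂ)
    (h1 : (inner ℂ r a : ℂ) = (c : ℂ) * t) (h2 : (inner ℂ s a : ℂ) = (s' : ℂ) * t)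
    (h3 : (inner ℂ r b : ℂ) = -((s' : ℂ) * t)) (h4 : (inner ℂ s b : ℂ) = (c : ℂ) * t) :
    (s' + 2 * c) * t.re ≤ 2 := by
  -- the four rewritten inner products
  have key1 : (inner ℂ r a : ℂ) = inner ℂ (F r) (E a) := by
    calc (inner ℂ r a : ℂ) = inner ℂ (E r) (F a) := by rw [hEr, hFa]
      _ = inner ℂ r (E (F a)) := hEsa _ _
      _ = inner ℂ r (F (E a)) := by rw [hEF]
      _ = inner ℂ (F r) (E a) := (hFsa _ _).symm
  have haE : F (a - E a) = a - E a := by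
    rw [map_sub, hFa, ← hEF, hFa]
  have key2 : (inner ℂ s a : ℂ) = inner ℂ (F s) (a - E a) := by
    have h0 : (inner ℂ s (E a) : ℂ) = 0 := by rw [← hEsa, hEs, inner_zero_left]
    calc (inner ℂ s a : ℂ) = inner ℂ s (a - E a) := by rw [inner_sub_right, h0, sub_zero]
      _ = inner ℂ s (F (a - E a)) := by rw [haE]
      _ = inner ℂ (F s) (a - E a) := (hFsa _ _).symm
  have hrE : E (r - F r) = r - F r := by
    rw [map_sub, hEr, hEF, hEr]
  have key3 : (inner ℂ r b : ℂ) = inner ℂ (r - F r) (E b) := by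
    have h0 : (inner ℂ (F r) b : ℂ) = 0 := by rw [hFsa, hFb, inner_zero_right]
    calc (inner ℂ r b : ℂ) = inner ℂ (r - F r) b := by rw [inner_sub_left, h0, sub_zero]
      _ = inner ℂ (E (r - F r)) b := by rw [hrE]
      _ = inner ℂ (r - F r) (E b) := hEsa _ _
  have key4 : (inner ℂ s b : ℂ) = inner ℂ (s - F s) (b - E b) := by
    have h0 : (inner ℂ (F s) b : ℂ) = 0 := by rw [hFsa, hFb, inner_zero_right]
    have h0' : (inner ℂ (s - F s) (E b) : ℂ) = 0 := by
      rw [← hEsa, map_sub, hEs, hEF, hEs, map_zero]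
      simp
    calc (inner ℂ s b : ℂ) = inner ℂ (s - F s) b := by rw [inner_sub_left, h0, sub_zero]
      _ = inner ℂ (s - F s) (b - E b) := by rw [inner_sub_right, h0', sub_zero]
  -- norms
  set ρ := ‖F r‖ with hρ
  set ρ' := ‖r - F r‖ with hρ'
  set α := ‖E a‖ with hα
  set α' := ‖a - E a‖ with hα'
  set σ := ‖F s‖ with hσ
  set σ' := ‖s - F s‖ with hσ'
  set β := ‖E b‖ with hβ
  set β' := ‖b - E b‖ with hβ'
  have hρ0 : 0 ≤ ρ := norm_nonneg _
  have hρ'0 : 0 ≤ ρ' := norm_nonneg _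
  have hα0 : 0 ≤ α := norm_nonneg _
  have hα'0 : 0 ≤ α' := norm_nonneg _
  have hσ0 : 0 ≤ σ := norm_nonneg _
  have hσ'0 : 0 ≤ σ' := norm_nonneg _
  have hβ0 : 0 ≤ β := norm_nonneg _
  have hβ'0 : 0 ≤ β' := norm_nonneg _
  have P1 : ρ ^ 2 + ρ' ^ 2 = 1 := by
    have := pyth F hFsa hFF r; rw [hrn] at this; simpa using this
  have P2 : α ^ 2 + α' ^ 2 = 1 := by
    have := pyth E hEsa hEE a; rw [han] at this; simpa using this
  have P3 : σ ^ 2 + σ' ^ 2 = 1 := by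
    have := pyth F hFsa hFF s; rw [hsn] at this; simpa using this
  have P4 : β ^ 2 + β' ^ 2 = 1 := by
    have := pyth E hEsa hEE b; rw [hbn] at this; simpa using this
  -- the four scalar bounds
  have i1 : c * t.re ≤ ρ * α := by
    have e : c * t.re = ((c : ℂ) * t).re := by simp [Complex.mul_re]
    calc c * t.re = ((inner ℂ (F r) (E a) : ℂ)).re := by rw [← key1, h1, ← e]
      _ ≤ ‖(inner ℂ (F r) (E a) : ℂ)‖ := Complex.re_le_norm _
      _ ≤ ρ * α := norm_inner_le_norm _ _
  have i2 : s' * t.re ≤ σ * α' := by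
    have e : s' * t.re = ((s' : ℂ) * t).re := by simp [Complex.mul_re]
    calc s' * t.re = ((inner ℂ (F s) (a - E a) : ℂ)).re := by rw [← key2, h2, ← e]
      _ ≤ ‖(inner ℂ (F s) (a - E a) : ℂ)‖ := Complex.re_le_norm _
      _ ≤ σ * α' := norm_inner_le_norm _ _
  have i3 : s' * t.re ≤ ρ' * β := by
    have e : s' * t.re = (-(inner ℂ r b : ℂ)).re := by
      rw [h3]; simp [Complex.mul_re]
    calc s' * t.re = (-(inner ℂ (r - F r) (E b) : ℂ)).re := by rw [← key3, ← e]
      _ ≤ ‖-(inner ℂ (r - F r) (E b) : ℂ)‖ := Complex.re_le_norm _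
      _ = ‖(inner ℂ (r - F r) (E b) : ℂ)‖ := norm_neg _
      _ ≤ ρ' * β := norm_inner_le_norm _ _
  have i4 : c * t.re ≤ σ' * β' := by
    have e : c * t.re = ((c : ℂ) * t).re := by simp [Complex.mul_re]
    calc c * t.re = ((inner ℂ (s - F s) (b - E b) : ℂ)).re := by rw [← key4, h4, ← e]
      _ ≤ ‖(inner ℂ (s - F s) (b - E b) : ℂ)‖ := Complex.re_le_norm _
      _ ≤ σ' * β' := norm_inner_le_norm _ _
  exact endgame c s' t.re ρ ρ' α α' σ σ' β β' hρ0 hρ'0 hα0 hα'0 hσ0 hσ'0 hβ0 hβ'0 P1 P2 P3 P4 i1 i2 i3 i4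

end HMAux

namespace HMAux

variable {n d₁ d₂ : ℕ}

lemma tensor_inner (v w : EuclideanSpace ℂ (Fin n)) (x y : Fin 2 → ℂ) :
    (inner ℂ (tensorWith2 v x) (tensorWith2 w y) : ℂ)
      = (∑ j, conj (x j) * y j) * inner ℂ v w := by
  simp only [PiLp.inner_apply, RCLike.inner_apply', tensorWith2]
  calc (∑ p : Fin n × Fin 2, conj (v p.1 * x p.2) * (w p.1 * y p.2))
      = ∑ i, ∑ j, conj (v i * x j) * (w i * y j) := Fintype.sum_prod_type _
    _ = ∑ i, ∑ j, (conj (x j) * y j) * (conj (v i) * w i) := by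
        refine Finset.sum_congr rfl fun i _ => Finset.sum_congr rfl fun j _ => ?_
        simp only [map_mul]
        ring
    _ = ∑ j, ∑ i, (conj (x j) * y j) * (conj (v i) * w i) := Finset.sum_comm
    _ = (∑ j, conj (x j) * y j) * ∑ i, conj (v i) * w i := by
        rw [Finset.sum_mul_sum]

lemma tensor_decomp (w : EuclideanSpace ℂ (Fin n)) (a b : ℂ) :
    tensorWith2 w ![a, b] = a • tensorWith2 w ![1, 0] + b • tensorWith2 w ![0, 1] := by
  ext p
  obtain ⟨i, j⟩ := p
  have : ((a • tensorWith2 w ![1, 0] + b • tensorWith2 w ![0, 1]) : EuclideanSpace ℂ (Fin n × Fin 2)) (i, j)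
      = a * tensorWith2 w ![1, 0] (i, j) + b * tensorWith2 w ![0, 1] (i, j) := rfl
  rw [this]
  fin_cases j <;> simp [tensorWith2] <;> ring

lemma norm_tensor (v : EuclideanSpace ℂ (Fin n)) (x : Fin 2 → ℂ)
    (hx : (∑ j, conj (x j) * x j) = 1) (hv : ‖v‖ = 1) : ‖tensorWith2 v x‖ = 1 := by
  have h1 : (inner ℂ (tensorWith2 v x) (tensorWith2 v x) : ℂ) = inner ℂ v v := by
    rw [tensor_inner, hx, one_mul]
  have h3 : ‖tensorWith2 v x‖ ^ 2 = ‖v‖ ^ 2 := by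
    rw [← inner_self_eq_norm_sq (𝕜 := ℂ), ← inner_self_eq_norm_sq (𝕜 := ℂ), h1]
  calc ‖tensorWith2 v x‖ = Real.sqrt (‖tensorWith2 v x‖ ^ 2) :=
        (Real.sqrt_sq (norm_nonneg _)).symm
    _ = 1 := by rw [h3, hv, one_pow, Real.sqrt_one]

lemma MatOf_comb (z z' : EuclideanSpace ℂ (Fin d₁ × Fin d₂)) (a b : ℂ) :
    MatOf (a • z + b • z') = a • MatOf z + b • MatOf z' := by
  ext i j
  rfl

lemma colv_orth {x y : EuclideanSpace ℂ (Fin d₁ × Fin d₂)}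
    (h : (MatOf x)ᴴ * MatOf y = 0) (j j' : Fin d₂) :
    (inner ℂ (colv x j) (colv y j') : ℂ) = 0 := by
  have h0 := congrFun (congrFun h j) j'
  simp only [Matrix.mul_apply, Matrix.conjTranspose_apply, MatOf, Matrix.of_apply,
    Matrix.zero_apply, Complex.star_def] at h0
  simpa [PiLp.inner_apply, RCLike.inner_apply', colv, mul_comm] using h0

lemma rowv_orth {x y : EuclideanSpace ℂ (Fin d₁ × Fin d₂)}
    (h : MatOf x * (MatOf y)ᴴ = 0) (i i' : Fin d₁) :
    (inner ℂ (rowv x i) (rowv y i') : ℂ) = 0 := by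
  have h0 := congrFun (congrFun h i) i'
  simp only [Matrix.mul_apply, Matrix.conjTranspose_apply, MatOf, Matrix.of_apply,
    Matrix.zero_apply, Complex.star_def] at h0
  have h1 : conj (∑ j, x (i, j) * conj (y (i', j))) = (0 : ℂ) := by rw [h0, map_zero]
  rw [map_sum] at h1
  simp only [map_mul, Complex.conj_conj] at h1
  simp only [PiLp.inner_apply, RCLike.inner_apply', rowv]
  exact h1

lemma mem_orth_span {d m : ℕ} {g : Fin m → EuclideanSpace ℂ (Fin d)}
    {z : EuclideanSpace ℂ (Fin d)} (h : ∀ i, (inner ℂ (g i) z : ℂ) = 0) :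
    z ∈ (Submodule.span ℂ (Set.range g))ᗮ := by
  rw [Submodule.mem_orthogonal]
  intro u hu
  refine Submodule.span_induction (p := fun u _ => (inner ℂ u z : ℂ) = 0) ?_ ?_ ?_ ?_ hu
  · rintro x ⟨i, rfl⟩
    exact h i
  · exact inner_zero_left z
  · intro p q _ _ hp hq
    rw [inner_add_left, hp, hq, add_zero]
  · intro a p _ hp
    rw [inner_smul_left, hp, mul_zero]

/-! ### Eliminating the phase freedom in the hidden-pair conditions -/

lemma phase1 (R S : Matrix (Fin d₁) (Fin d₂) ℂ) (x y : ℂ) (c s : ℝ)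
    (hxx : x * conj x = (c : ℂ) ^ 2) (hyy : y * conj y = (s : ℂ) ^ 2)
    (hxy : x * conj y = (c : ℂ) * (s : ℂ)) (hyx : conj x * y = (c : ℂ) * (s : ℂ))
    (hcs : (c : ℂ) ^ 2 + (s : ℂ) ^ 2 = 1)
    (h : (x • R + y • S) * ((-(conj y)) • R + (conj x) • S)ᴴ = 0) :
    ((c : ℂ) • R + (s : ℂ) • S) * ((-(s : ℂ)) • R + (c : ℂ) • S)ᴴ = 0 := by
  have e1 : (conj x ^ 2 + conj y ^ 2) * x ^ 2 = (c : ℂ) ^ 2 := by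
    calc (conj x ^ 2 + conj y ^ 2) * x ^ 2 = (x * conj x) ^ 2 + (x * conj y) ^ 2 := by ring
      _ = ((c : ℂ) ^ 2) ^ 2 + ((c : ℂ) * (s : ℂ)) ^ 2 := by rw [hxx, hxy]
      _ = (c : ℂ) ^ 2 * ((c : ℂ) ^ 2 + (s : ℂ) ^ 2) := by ring
      _ = (c : ℂ) ^ 2 := by rw [hcs, mul_one]
  have e2 : (conj x ^ 2 + conj y ^ 2) * y ^ 2 = (s : ℂ) ^ 2 := by
    calc (conj x ^ 2 + conj y ^ 2) * y ^ 2 = (conj x * y) ^ 2 + (y * conj y) ^ 2 := by ring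
      _ = ((c : ℂ) * (s : ℂ)) ^ 2 + ((s : ℂ) ^ 2) ^ 2 := by rw [hyx, hyy]
      _ = (s : ℂ) ^ 2 * ((c : ℂ) ^ 2 + (s : ℂ) ^ 2) := by ring
      _ = (s : ℂ) ^ 2 := by rw [hcs, mul_one]
  have e3 : (conj x ^ 2 + conj y ^ 2) * (x * y) = (c : ℂ) * (s : ℂ) := by
    calc (conj x ^ 2 + conj y ^ 2) * (x * y)
        = (x * conj x) * (conj x * y) + (x * conj y) * (y * conj y) := by ring
      _ = (c : ℂ) ^ 2 * ((c : ℂ) * (s : ℂ)) + ((c : ℂ) * (s : ℂ)) * (s : ℂ) ^ 2 := by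
          rw [hxx, hyx, hxy, hyy]
      _ = ((c : ℂ) * (s : ℂ)) * ((c : ℂ) ^ 2 + (s : ℂ) ^ 2) := by ring
      _ = (c : ℂ) * (s : ℂ) := by rw [hcs, mul_one]
  have key : ((c : ℂ) • R + (s : ℂ) • S) * ((-(s : ℂ)) • R + (c : ℂ) • S)ᴴ
      = (conj x ^ 2 + conj y ^ 2) • ((x • R + y • S) * ((-(conj y)) • R + (conj x) • S)ᴴ) := by
    ext i j
    simp only [Matrix.mul_apply, Matrix.conjTranspose_apply, Matrix.add_apply,
      Matrix.smul_apply, smul_eq_mul, star_add, star_mul', star_neg, Complex.star_def,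
      Complex.conj_conj, Complex.conj_ofReal, Finset.mul_sum]
    refine Finset.sum_congr rfl fun k _ => ?_
    linear_combination -(R i k * conj (S j k)) * e1 + (S i k * conj (R j k)) * e2 +
      (R i k * conj (R j k) - S i k * conj (S j k)) * e3
  rw [key, h, smul_zero]

lemma phase2 (R S : Matrix (Fin d₁) (Fin d₂) ℂ) (x y : ℂ) (c s : ℝ)
    (hxx : x * conj x = (c : ℂ) ^ 2) (hyy : y * conj y = (s : ℂ) ^ 2)
    (hxy : x * conj y = (c : ℂ) * (s : ℂ)) (hyx : conj x * y = (c : ℂ) * (s : ℂ))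
    (hcs : (c : ℂ) ^ 2 + (s : ℂ) ^ 2 = 1)
    (h : (x • R + y • S)ᴴ * ((-(conj y)) • R + (conj x) • S) = 0) :
    ((c : ℂ) • R + (s : ℂ) • S)ᴴ * ((-(s : ℂ)) • R + (c : ℂ) • S) = 0 := by
  have e1 : (x ^ 2 + y ^ 2) * conj x ^ 2 = (c : ℂ) ^ 2 := by
    calc (x ^ 2 + y ^ 2) * conj x ^ 2 = (x * conj x) ^ 2 + (conj x * y) ^ 2 := by ring
      _ = ((c : ℂ) ^ 2) ^ 2 + ((c : ℂ) * (s : ℂ)) ^ 2 := by rw [hxx, hyx]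
      _ = (c : ℂ) ^ 2 * ((c : ℂ) ^ 2 + (s : ℂ) ^ 2) := by ring
      _ = (c : ℂ) ^ 2 := by rw [hcs, mul_one]
  have e2 : (x ^ 2 + y ^ 2) * conj y ^ 2 = (s : ℂ) ^ 2 := by
    calc (x ^ 2 + y ^ 2) * conj y ^ 2 = (x * conj y) ^ 2 + (y * conj y) ^ 2 := by ring
      _ = ((c : ℂ) * (s : ℂ)) ^ 2 + ((s : ℂ) ^ 2) ^ 2 := by rw [hxy, hyy]
      _ = (s : ℂ) ^ 2 * ((c : ℂ) ^ 2 + (s : ℂ) ^ 2) := by ring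
      _ = (s : ℂ) ^ 2 := by rw [hcs, mul_one]
  have e3 : (x ^ 2 + y ^ 2) * (conj x * conj y) = (c : ℂ) * (s : ℂ) := by
    calc (x ^ 2 + y ^ 2) * (conj x * conj y)
        = (x * conj x) * (x * conj y) + (conj x * y) * (y * conj y) := by ring
      _ = (c : ℂ) ^ 2 * ((c : ℂ) * (s : ℂ)) + ((c : ℂ) * (s : ℂ)) * (s : ℂ) ^ 2 := by
          rw [hxx, hxy, hyx, hyy]
      _ = ((c : ℂ) * (s : ℂ)) * ((c : ℂ) ^ 2 + (s : ℂ) ^ 2) := by ring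
      _ = (c : ℂ) * (s : ℂ) := by rw [hcs, mul_one]
  have key : ((c : ℂ) • R + (s : ℂ) • S)ᴴ * ((-(s : ℂ)) • R + (c : ℂ) • S)
      = (x ^ 2 + y ^ 2) • ((x • R + y • S)ᴴ * ((-(conj y)) • R + (conj x) • S)) := by
    ext i j
    simp only [Matrix.mul_apply, Matrix.conjTranspose_apply, Matrix.add_apply,
      Matrix.smul_apply, smul_eq_mul, star_add, star_mul', star_neg, Complex.star_def,
      Complex.conj_conj, Complex.conj_ofReal, Finset.mul_sum]
    refine Finset.sum_congr rfl fun k _ => ?_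
    linear_combination -(conj (R k i) * S k j) * e1 + (conj (S k i) * R k j) * e2 +
      (conj (R k i) * R k j - conj (S k i) * S k j) * e3
  rw [key, h, smul_zero]

lemma pair_matrix (U : EuclideanSpace ℂ (Fin n × Fin 2) →ₗᵢ[ℂ] EuclideanSpace ℂ (Fin d₁ × Fin d₂))
    (w : EuclideanSpace ℂ (Fin n)) (c s : ℝ)
    (hcs : (c : ℂ) ^ 2 + (s : ℂ) ^ 2 = 1)
    (h : IsHiddenPair U (projOf (c : ℂ) (s : ℂ)) w) :
    ((c : ℂ) • Rmat U w + (s : ℂ) • Smat U w) * ((-(s : ℂ)) • Rmat U w + (c : ℂ) • Smat U w)ᴴ = 0 ∧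
    ((c : ℂ) • Rmat U w + (s : ℂ) • Smat U w)ᴴ * ((-(s : ℂ)) • Rmat U w + (c : ℂ) • Smat U w) = 0 := by
  obtain ⟨-, x, y, -, hproj, hM1, hM2⟩ := h
  have h00 := congrFun (congrFun hproj 0) 0
  have h01 := congrFun (congrFun hproj 0) 1
  have h10 := congrFun (congrFun hproj 1) 0
  have h11 := congrFun (congrFun hproj 1) 1
  simp only [projOf, Matrix.cons_val', Matrix.cons_val_zero, Matrix.cons_val_one,
    Matrix.head_cons, Matrix.empty_val', Matrix.cons_val_fin_one, Matrix.head_fin_const,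
    Matrix.of_apply, Complex.conj_ofReal] at h00 h01 h10 h11
  have hxx : x * conj x = (c : ℂ) ^ 2 := by rw [← h00]; ring
  have hyy : y * conj y = (s : ℂ) ^ 2 := by rw [← h11]; ring
  have hxy : x * conj y = (c : ℂ) * (s : ℂ) := by rw [← h01]
  have hyx : conj x * y = (c : ℂ) * (s : ℂ) := by rw [mul_comm, ← h10]; ring
  exact ⟨phase1 _ _ x y c s hxx hyy hxy hyx hcs hM1,
    phase2 _ _ x y c s hxx hyy hxy hyx hcs hM2⟩

end HMAux

set_option maxHeartbeats 1000000 in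
/-- If `(P, v)` and `(L, w)` are hidden-measurement pairs for `U`, where `P`
projects onto `(1,0)` and `L` projects onto `(cos θ, sin θ)` with `θ ∈ [0, π/2]`, then
`Re⟨v, w⟩ ≤ 2/(sin θ + 2 cos θ)` and `‖v − w‖² ≥ 2 − 4/(sin θ + 2 cos θ)`. -/
theorem hidden_measurement_pairs_inner_bound
    (n d₁ d₂ : ℕ) (hn : 0 < n) (hd₁ : 0 < d₁) (hd₂ : 0 < d₂)
    (U : EuclideanSpace ℂ (Fin n × Fin 2) →ₗᵢ[ℂ] EuclideanSpace ℂ (Fin d₁ × Fin d₂))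
    (θ : ℝ) (hθ : θ ∈ Set.Icc 0 (Real.pi / 2))
    (v w : EuclideanSpace ℂ (Fin n))
    (hP : IsHiddenPair U (projOf 1 0) v)
    (hL : IsHiddenPair U (projOf (Real.cos θ : ℂ) (Real.sin θ : ℂ)) w) :
    (inner ℂ v w : ℂ).re ≤ 2 / (Real.sin θ + 2 * Real.cos θ) ∧
    ‖v - w‖ ^ 2 ≥ 2 - 4 / (Real.sin θ + 2 * Real.cos θ) := by
  classical
  obtain ⟨hθ0, hθ1⟩ := hθ
  set c := Real.cos θ with hc_def
  set s := Real.sin θ with hs_def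
  have hc : 0 ≤ c := Real.cos_nonneg_of_mem_Icc ⟨by linarith [Real.pi_pos], hθ1⟩
  have hs : 0 ≤ s := Real.sin_nonneg_of_nonneg_of_le_pi hθ0 (by linarith [Real.pi_pos])
  have hc1 : c ≤ 1 := Real.cos_le_one θ
  have hs1 : s ≤ 1 := Real.sin_le_one θ
  have hcs : s ^ 2 + c ^ 2 = 1 := Real.sin_sq_add_cos_sq θ
  have hden : 1 ≤ s + 2 * c := by nlinarith
  have hdpos : 0 < s + 2 * c := by linarith
  have hv1 : ‖v‖ = 1 := hP.1
  have hw1 : ‖w‖ = 1 := hL.1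
  have hcsC : (c : ℂ) ^ 2 + (s : ℂ) ^ 2 = 1 := by
    have : ((c ^ 2 + s ^ 2 : ℝ) : ℂ) = 1 := by
      rw [show c ^ 2 + s ^ 2 = 1 by linarith]; norm_num
    push_cast at this
    linear_combination this
  -- matrix conditions for the first pair
  have hP' : IsHiddenPair U (projOf ((1 : ℝ) : ℂ) ((0 : ℝ) : ℂ)) v := by
    rw [Complex.ofReal_one, Complex.ofReal_zero]; exact hP
  have hPm := HMAux.pair_matrix U v 1 0 (by norm_num) hP'
  have hRS : Rmat U v * (Smat U v)ᴴ = 0 := by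
    have := hPm.1
    simpa using this
  have hRSc : (Rmat U v)ᴴ * Smat U v = 0 := by
    have := hPm.2
    simpa using this
  -- matrix conditions for the second pair
  have hLm := HMAux.pair_matrix U w c s hcsC hL
  -- the four vectors
  set r : EuclideanSpace ℂ (Fin d₁ × Fin d₂) := U (tensorWith2 v ![1, 0]) with hr_def
  set s₂ : EuclideanSpace ℂ (Fin d₁ × Fin d₂) := U (tensorWith2 v ![0, 1]) with hs2_def
  set a : EuclideanSpace ℂ (Fin d₁ × Fin d₂) := U (tensorWith2 w ![(c : ℂ), (s : ℂ)]) with ha_def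
  set b : EuclideanSpace ℂ (Fin d₁ × Fin d₂) :=
    U (tensorWith2 w ![-(s : ℂ), (c : ℂ)]) with hb_def
  have hAmat : MatOf a = (c : ℂ) • Rmat U w + (s : ℂ) • Smat U w := by
    rw [ha_def, HMAux.tensor_decomp w (c : ℂ) (s : ℂ), map_add, map_smul, map_smul]
    exact HMAux.MatOf_comb _ _ _ _
  have hBmat : MatOf b = (-(s : ℂ)) • Rmat U w + (c : ℂ) • Smat U w := by
    rw [hb_def, HMAux.tensor_decomp w (-(s : ℂ)) (c : ℂ), map_add, map_smul, map_smul]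
    exact HMAux.MatOf_comb _ _ _ _
  have hAB : MatOf a * (MatOf b)ᴴ = 0 := by rw [hAmat, hBmat]; exact hLm.1
  have hABc : (MatOf a)ᴴ * MatOf b = 0 := by rw [hAmat, hBmat]; exact hLm.2
  have hRSmat : (MatOf r)ᴴ * MatOf s₂ = 0 := hRSc
  -- the subspaces and projections
  set W₁ : Submodule ℂ (EuclideanSpace ℂ (Fin d₁)) :=
    Submodule.span ℂ (Set.range (HMAux.colv r)) with hW₁
  set W₂ : Submodule ℂ (EuclideanSpace ℂ (Fin d₂)) :=
    Submodule.span ℂ (Set.range (HMAux.rowv a)) with hW₂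
  have hEr : HMAux.Emap W₁ r = r :=
    HMAux.Emap_fix _ _ fun j => Submodule.subset_span ⟨j, rfl⟩
  have hEs : HMAux.Emap W₁ s₂ = 0 :=
    HMAux.Emap_kill _ _ fun j =>
      HMAux.mem_orth_span fun j' => HMAux.colv_orth hRSmat j' j
  have hFa : HMAux.Fmap W₂ a = a :=
    HMAux.Fmap_fix _ _ fun i => Submodule.subset_span ⟨i, rfl⟩
  have hFb : HMAux.Fmap W₂ b = 0 :=
    HMAux.Fmap_kill _ _ fun i =>
      HMAux.mem_orth_span fun i' => HMAux.rowv_orth hAB i' i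
  -- norms
  have hrn : ‖r‖ = 1 := by
    rw [hr_def, U.norm_map]
    refine HMAux.norm_tensor v _ ?_ hv1
    simp [Fin.sum_univ_two]
  have hsn : ‖s₂‖ = 1 := by
    rw [hs2_def, U.norm_map]
    refine HMAux.norm_tensor v _ ?_ hv1
    simp [Fin.sum_univ_two]
  have han : ‖a‖ = 1 := by
    rw [ha_def, U.norm_map]
    refine HMAux.norm_tensor w _ ?_ hw1
    simp only [Fin.sum_univ_two, Matrix.cons_val_zero, Matrix.cons_val_one, Matrix.head_cons,
      Complex.conj_ofReal]
    linear_combination hcsC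
  have hbn : ‖b‖ = 1 := by
    rw [hb_def, U.norm_map]
    refine HMAux.norm_tensor w _ ?_ hw1
    simp only [Fin.sum_univ_two, Matrix.cons_val_zero, Matrix.cons_val_one, Matrix.head_cons,
      map_neg, Complex.conj_ofReal]
    linear_combination hcsC
  -- inner product values
  set t : ℂ := inner ℂ v w with ht_def
  have h1 : (inner ℂ r a : ℂ) = (c : ℂ) * t := by
    rw [hr_def, ha_def, U.inner_map_map, HMAux.tensor_inner, ← ht_def]
    simp only [Fin.sum_univ_two, Matrix.cons_val_zero, Matrix.cons_val_one, Matrix.head_cons,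
      Complex.conj_ofReal, map_one, map_zero, map_neg]
    ring
  have h2 : (inner ℂ s₂ a : ℂ) = (s : ℂ) * t := by
    rw [hs2_def, ha_def, U.inner_map_map, HMAux.tensor_inner, ← ht_def]
    simp only [Fin.sum_univ_two, Matrix.cons_val_zero, Matrix.cons_val_one, Matrix.head_cons,
      Complex.conj_ofReal, map_one, map_zero, map_neg]
    ring
  have h3 : (inner ℂ r b : ℂ) = -((s : ℂ) * t) := by
    rw [hr_def, hb_def, U.inner_map_map, HMAux.tensor_inner, ← ht_def]
    simp only [Fin.sum_univ_two, Matrix.cons_val_zero, Matrix.cons_val_one, Matrix.head_cons,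
      Complex.conj_ofReal, map_one, map_zero, map_neg]
    ring
  have h4 : (inner ℂ s₂ b : ℂ) = (c : ℂ) * t := by
    rw [hs2_def, hb_def, U.inner_map_map, HMAux.tensor_inner, ← ht_def]
    simp only [Fin.sum_univ_two, Matrix.cons_val_zero, Matrix.cons_val_one, Matrix.head_cons,
      Complex.conj_ofReal, map_one, map_zero, map_neg]
    ring
  -- the core bound
  have hcore : (s + 2 * c) * t.re ≤ 2 :=
    HMAux.core (HMAux.Emap W₁) (HMAux.Fmap W₂)
      (HMAux.Emap_sa W₁) (HMAux.Fmap_sa W₂)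
      (HMAux.Emap_Fmap_comm W₁ W₂) (HMAux.Emap_idem W₁) (HMAux.Fmap_idem W₂)
      r s₂ a b hrn hsn han hbn hEr hEs hFa hFb c s hc hs t h1 h2 h3 h4
  have hmain : t.re ≤ 2 / (s + 2 * c) := by
    rw [le_div_iff₀ hdpos]
    linarith
  refine ⟨hmain, ?_⟩
  have hnorm : ‖v - w‖ ^ 2 = ‖v‖ ^ 2 - 2 * t.re + ‖w‖ ^ 2 := by
    have := @norm_sub_sq ℂ _ _ _ _ v w
    simpa [ht_def] using this
  have h4d : 4 / (s + 2 * c) = 2 * (2 / (s + 2 * c)) := by ring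
  rw [ge_iff_le, hnorm, hv1, hw1, h4d]
  nlinarith [hmain]

end
end

section
/- Let V, V′, W, W′ be d₁ × d₂ complex matrices, each of Frobenius norm 1, satisfying V(V′)* = 0, V*(V′) = 0, W(W′)* = 0, and W*(W′) = 0. Then Re⟨V, W′⟩ ≤ ‖V − W‖ · ‖W′ − V′‖ = √((2 − 2 Re⟨V, W⟩)(2 − 2 Re⟨V′, W′⟩)), where ⟨A, B⟩ = Tr(A B*) is the Frobenius (Hilbert–Schmidt) inner product and ‖·‖ the Frobenius norm. -/
open scoped ComplexConjugate Matrix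

noncomputable section

/-- The Frobenius (Hilbert–Schmidt) inner product `⟨A, B⟩ = Tr(A B*)`. -/
def frobInner {d₁ d₂ : ℕ} (A B : Matrix (Fin d₁) (Fin d₂) ℂ) : ℂ :=
  (A * Bᴴ).trace

/-- The Frobenius norm `‖A‖ = √⟨A, A⟩`. -/
def frobNorm {d₁ d₂ : ℕ} (A : Matrix (Fin d₁) (Fin d₂) ℂ) : ℝ :=
  Real.sqrt (frobInner A A).re

namespace FrobAux

variable {d₁ d₂ : ℕ}

/-- Flattening a matrix to a Euclidean-space vector. -/
def toE (A : Matrix (Fin d₁) (Fin d₂) ℂ) : EuclideanSpace ℂ (Fin d₁ × Fin d₂) :=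
  (WithLp.equiv 2 _).symm (fun p => A p.1 p.2)

lemma toE_sub (A B : Matrix (Fin d₁) (Fin d₂) ℂ) : toE (A - B) = toE A - toE B := rfl

lemma frobInner_eq (A B : Matrix (Fin d₁) (Fin d₂) ℂ) :
    frobInner A B = (inner ℂ (toE B) (toE A) : ℂ) := by
  simp only [frobInner, Matrix.trace, Matrix.diag, Matrix.mul_apply,
    Matrix.conjTranspose_apply, toE, PiLp.inner_apply, RCLike.inner_apply,
    WithLp.equiv_symm_apply, PiLp.toLp_apply, Fintype.sum_prod_type]
  congr 1

lemma frobNorm_eq (A : Matrix (Fin d₁) (Fin d₂) ℂ) : frobNorm A = ‖toE A‖ := by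
  rw [frobNorm, frobInner_eq, @norm_eq_sqrt_re_inner ℂ]
  rfl

lemma frobInner_self_re_nonneg (A : Matrix (Fin d₁) (Fin d₂) ℂ) :
    0 ≤ (frobInner A A).re := by
  rw [frobInner_eq]; exact inner_self_nonneg (𝕜 := ℂ)

lemma re_frobInner_le (A B : Matrix (Fin d₁) (Fin d₂) ℂ) :
    (frobInner A B).re ≤ frobNorm A * frobNorm B := by
  rw [frobInner_eq, frobNorm_eq, frobNorm_eq, mul_comm]
  exact re_inner_le_norm (𝕜 := ℂ) _ _

/-- The column space of `V`. -/
def Kspace (V : Matrix (Fin d₁) (Fin d₂) ℂ) : Submodule ℂ (EuclideanSpace ℂ (Fin d₁)) :=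
  LinearMap.range (Matrix.toEuclideanLin V)

/-- Orthogonal projection onto the column space of `V`, as a linear map. -/
def Plin (V : Matrix (Fin d₁) (Fin d₂) ℂ) :
    EuclideanSpace ℂ (Fin d₁) →ₗ[ℂ] EuclideanSpace ℂ (Fin d₁) :=
  (Kspace V).subtype ∘ₗ (Submodule.orthogonalProjectionOnto (Kspace V)).toLinearMap

/-- Orthogonal projection onto the column space of `V`, as a matrix. -/
def Pmat (V : Matrix (Fin d₁) (Fin d₂) ℂ) : Matrix (Fin d₁) (Fin d₁) ℂ :=
  Matrix.toEuclideanLin.symm (Plin V)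

lemma toEuclideanLin_Pmat (V : Matrix (Fin d₁) (Fin d₂) ℂ) :
    Matrix.toEuclideanLin (Pmat V) = Plin V :=
  LinearEquiv.apply_symm_apply _ _

lemma toEuclideanLin_mul {a b c : Type*} [Fintype a] [Fintype b] [Fintype c]
    [DecidableEq a] [DecidableEq b] [DecidableEq c]
    (A : Matrix a b ℂ) (B : Matrix b c ℂ) :
    Matrix.toEuclideanLin (A * B) =
      (Matrix.toEuclideanLin A) ∘ₗ (Matrix.toEuclideanLin B) := by
  refine LinearMap.ext fun x => ?_
  simp [Matrix.toEuclideanLin_apply, Matrix.mulVec_mulVec]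

lemma Plin_mem (V : Matrix (Fin d₁) (Fin d₂) ℂ) {x : EuclideanSpace ℂ (Fin d₁)}
    (hx : x ∈ Kspace V) : Plin V x = x := by
  simpa [Plin] using Submodule.starProjection_eq_self_iff.mpr hx

lemma Pmat_mul_self (V : Matrix (Fin d₁) (Fin d₂) ℂ) : Pmat V * V = V := by
  apply Matrix.toEuclideanLin.injective
  rw [toEuclideanLin_mul, toEuclideanLin_Pmat]
  refine LinearMap.ext fun x => ?_
  exact Plin_mem V ⟨x, rfl⟩

lemma Pmat_mul_perp (V V' : Matrix (Fin d₁) (Fin d₂) ℂ) (h2 : Vᴴ * V' = 0) :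
    Pmat V * V' = 0 := by
  apply Matrix.toEuclideanLin.injective
  rw [toEuclideanLin_mul, toEuclideanLin_Pmat, map_zero]
  refine LinearMap.ext fun x => ?_
  have hmem : Matrix.toEuclideanLin V' x ∈ (Kspace V)ᗮ := by
    intro u hu
    obtain ⟨z, rfl⟩ := hu
    rw [← LinearMap.adjoint_inner_right, ← Matrix.toEuclideanLin_conjTranspose_eq_adjoint,
      ← LinearMap.comp_apply, ← toEuclideanLin_mul, h2]
    simp
  simp only [Plin, LinearMap.comp_apply, LinearMap.zero_apply,
    ContinuousLinearMap.coe_coe]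
  rw [Submodule.orthogonalProjectionOnto_apply_of_mem_orthogonal hmem]
  simp

lemma Pmat_conjTranspose (V : Matrix (Fin d₁) (Fin d₂) ℂ) : (Pmat V)ᴴ = Pmat V := by
  apply Matrix.toEuclideanLin.injective
  rw [Matrix.toEuclideanLin_conjTranspose_eq_adjoint, toEuclideanLin_Pmat]
  have hsym := Submodule.starProjection_isSymmetric (K := Kspace V)
  exact ((LinearMap.eq_adjoint_iff _ _).mpr fun x y => hsym x y).symm

lemma Pmat_idem (V : Matrix (Fin d₁) (Fin d₂) ℂ) : Pmat V * Pmat V = Pmat V := by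
  apply Matrix.toEuclideanLin.injective
  rw [toEuclideanLin_mul, toEuclideanLin_Pmat]
  refine LinearMap.ext fun x => ?_
  exact Plin_mem V (by exact ((Submodule.orthogonalProjectionOnto (Kspace V)) x).2)

lemma frobNorm_Pmat_mul_le (V : Matrix (Fin d₁) (Fin d₂) ℂ)
    (X : Matrix (Fin d₁) (Fin d₂) ℂ) : frobNorm (Pmat V * X) ≤ frobNorm X := by
  have key : (frobInner (Pmat V * X) (Pmat V * X)).re ≤ (frobInner X X).re := by
    have e3 : ((Pmat V) * X * (Xᴴ * Pmat V)).trace = ((Pmat V) * (X * Xᴴ)).trace := by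
      rw [show Pmat V * X * (Xᴴ * Pmat V) = (Pmat V * (X * Xᴴ)) * Pmat V from by
          simp [Matrix.mul_assoc],
        Matrix.trace_mul_comm, ← Matrix.mul_assoc, Pmat_idem]
    have e1 : (X * (Xᴴ * Pmat V)).trace = ((Pmat V) * (X * Xᴴ)).trace := by
      rw [← Matrix.mul_assoc, Matrix.trace_mul_comm]
    have e2 : ((Pmat V) * X * Xᴴ).trace = ((Pmat V) * (X * Xᴴ)).trace := by
      rw [Matrix.mul_assoc]
    have h1 : frobInner (Pmat V * X) (Pmat V * X) = ((Pmat V) * (X * Xᴴ)).trace := by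
      rw [frobInner, Matrix.conjTranspose_mul, Pmat_conjTranspose]; exact e3
    have h2 : frobInner (X - Pmat V * X) (X - Pmat V * X)
        = frobInner X X - ((Pmat V) * (X * Xᴴ)).trace := by
      rw [frobInner, frobInner, Matrix.conjTranspose_sub, Matrix.conjTranspose_mul,
        Pmat_conjTranspose, Matrix.sub_mul, Matrix.mul_sub, Matrix.mul_sub,
        Matrix.trace_sub, Matrix.trace_sub, Matrix.trace_sub]
      rw [e1, e2, e3]; ring
    have h3 := frobInner_self_re_nonneg (X - Pmat V * X)
    rw [h2] at h3
    rw [h1]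
    have := Complex.sub_re (frobInner X X) ((Pmat V * (X * Xᴴ)).trace)
    simp only [Complex.sub_re] at h3
    linarith
  rw [frobNorm, frobNorm]
  exact Real.sqrt_le_sqrt key

lemma frobInner_conj (A B : Matrix (Fin d₁) (Fin d₂) ℂ) :
    frobInner B A = conj (frobInner A B) := by
  rw [frobInner, frobInner, starRingEnd_apply, ← Matrix.trace_conjTranspose,
    Matrix.conjTranspose_mul, Matrix.conjTranspose_conjTranspose]

lemma frobNorm_sq (A B : Matrix (Fin d₁) (Fin d₂) ℂ) (hA : frobNorm A = 1)
    (hB : frobNorm B = 1) :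
    (frobInner (A - B) (A - B)).re = 2 - 2 * (frobInner A B).re := by
  have hA1 : (frobInner A A).re = 1 := by
    have := frobInner_self_re_nonneg A
    rw [frobNorm] at hA
    nlinarith [Real.sq_sqrt this, hA]
  have hB1 : (frobInner B B).re = 1 := by
    have := frobInner_self_re_nonneg B
    rw [frobNorm] at hB
    nlinarith [Real.sq_sqrt this, hB]
  have expand : frobInner (A - B) (A - B)
      = frobInner A A - frobInner A B - frobInner B A + frobInner B B := by
    simp only [frobInner, Matrix.conjTranspose_sub, Matrix.sub_mul, Matrix.mul_sub,
      Matrix.trace_sub]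
    ring
  have hconj : (frobInner B A).re = (frobInner A B).re := by
    rw [frobInner_conj]; exact Complex.conj_re _
  rw [expand]
  simp only [Complex.add_re, Complex.sub_re]
  rw [hA1, hB1, hconj]; ring

end FrobAux

open FrobAux

/-- For Frobenius-norm-one matrices `V, V′, W, W′` with `V(V′)* = 0`,
`V*(V′) = 0`, `W(W′)* = 0`, `W*(W′) = 0`, one has
`Re⟨V, W′⟩ ≤ ‖V − W‖·‖W′ − V′‖ = √((2 − 2Re⟨V, W⟩)(2 − 2Re⟨V′, W′⟩))`. -/
theorem frobenius_inner_bound (d₁ d₂ : ℕ)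
    (V V' W W' : Matrix (Fin d₁) (Fin d₂) ℂ)
    (hV : frobNorm V = 1) (hV' : frobNorm V' = 1)
    (hW : frobNorm W = 1) (hW' : frobNorm W' = 1)
    (h1 : V * V'ᴴ = 0) (h2 : Vᴴ * V' = 0)
    (h3 : W * W'ᴴ = 0) (h4 : Wᴴ * W' = 0) :
    (frobInner V W').re ≤ frobNorm (V - W) * frobNorm (W' - V') ∧
    frobNorm (V - W) * frobNorm (W' - V') =
      Real.sqrt ((2 - 2 * (frobInner V W).re) * (2 - 2 * (frobInner V' W').re)) := by
  constructor
  · -- the inequality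
    set P := Pmat V with hP
    have hPV : P * V = V := Pmat_mul_self V
    have hPV' : P * V' = 0 := Pmat_mul_perp V V' h2
    have key : frobInner (P * (V - W)) (W' - V') = frobInner V W' := by
      rw [frobInner, frobInner, Matrix.mul_sub, hPV, Matrix.conjTranspose_sub,
        Matrix.mul_sub, Matrix.sub_mul, Matrix.sub_mul, Matrix.trace_sub,
        Matrix.trace_sub, Matrix.trace_sub]
      have t1 : (V * V'ᴴ).trace = 0 := by rw [h1, Matrix.trace_zero]
      have t2 : (P * W * W'ᴴ).trace = 0 := by
        rw [Matrix.mul_assoc, h3, Matrix.mul_zero, Matrix.trace_zero]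
      have t3 : (P * W * V'ᴴ).trace = 0 := by
        have hVP : V'ᴴ * P = 0 := by
          have := congrArg Matrix.conjTranspose hPV'
          rwa [Matrix.conjTranspose_mul, Matrix.conjTranspose_zero,
            Pmat_conjTranspose] at this
        rw [Matrix.trace_mul_comm, ← Matrix.mul_assoc, hVP, Matrix.zero_mul,
          Matrix.trace_zero]
      rw [t1, t2, t3]; ring
    calc (frobInner V W').re
        = (frobInner (P * (V - W)) (W' - V')).re := by rw [key]
      _ ≤ frobNorm (P * (V - W)) * frobNorm (W' - V') := re_frobInner_le _ _
      _ ≤ frobNorm (V - W) * frobNorm (W' - V') := by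
          apply mul_le_mul_of_nonneg_right (frobNorm_Pmat_mul_le V _)
          exact Real.sqrt_nonneg _
  · -- the norm identity
    have hVW := frobNorm_sq V W hV hW
    have hWV' := frobNorm_sq W' V' hW' hV'
    have hc : (frobInner W' V').re = (frobInner V' W').re := by
      rw [frobInner_conj]; exact Complex.conj_re _
    rw [frobNorm, frobNorm, hVW, hWV', hc]
    rw [← Real.sqrt_mul (by nlinarith [frobInner_self_re_nonneg (V - W), hVW])]

end
end
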